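/- The negation fragment of classical propositional logic (the consequence relation on formulas built from variables using only ¬, determined by the two-element matrix ⟨{0,1}, ¬, {1}⟩) is axiomatized by the rules: {x, ¬x} ⊢ y; {x} ⊢ ¬¬x; {¬¬x} ⊢ x. That is, the smallest substitution-invariant consequence relation containing these rules coincides with the consequence relation of the matrix ⟨{0,1}, {1}⟩. -/
import Mathlib


/-- Formulas built from countably many variables using only negation. -/
inductive NF : Type
  | var : ℕ → NF
  | neg : NF → NF

/-- Substitution of formulas for variables. -/
def NF.subst (σ : ℕ → NF) : NF → NF
  | .var n => σ n
  | .neg φ => .neg (NF.subst σ φ)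

/-- Evaluation in the two-element matrix `⟨{0,1}, ¬, {1}⟩` (with `true` the
designated value). -/
def NF.evalB (v : ℕ → Bool) : NF → Bool
  | .var n => v n
  | .neg φ => !(NF.evalB v φ)

/-- The consequence relation of the matrix `⟨{0,1}, {1}⟩`: the negation
fragment of classical propositional logic. -/
def NFSem (Γ : Set NF) (φ : NF) : Prop :=
  ∀ v : ℕ → Bool, (∀ γ ∈ Γ, NF.evalB v γ = true) → NF.evalB v φ = true

/-- `C` is a substitution-invariant consequence relation: reflexive, monotone,
closed under cut, and closed under uniform substitution. -/
def IsConsRel (C : Set NF → NF → Prop) : Prop :=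
  (∀ Γ φ, φ ∈ Γ → C Γ φ) ∧
  (∀ Γ Δ φ, Γ ⊆ Δ → C Γ φ → C Δ φ) ∧
  (∀ Γ Δ φ, C Δ φ → (∀ δ ∈ Δ, C Γ δ) → C Γ φ) ∧
  (∀ Γ φ (σ : ℕ → NF), C Γ φ → C (NF.subst σ '' Γ) (NF.subst σ φ))

/-- `C` contains the rules `{x, ¬x} ⊢ y`, `{x} ⊢ ¬¬x`, `{¬¬x} ⊢ x`
(schematically, i.e. all their substitution instances). -/
def HasNegRules (C : Set NF → NF → Prop) : Prop :=
  (∀ φ ψ, C {φ, .neg φ} ψ) ∧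
  (∀ φ, C {φ} (.neg (.neg φ))) ∧
  (∀ φ, C {.neg (.neg φ)} φ)

/-! ### Auxiliary machinery -/

namespace NF

def depth : NF → ℕ
  | .var _ => 0
  | .neg φ => φ.depth + 1

def base : NF → ℕ
  | .var n => n
  | .neg φ => φ.base

def iterNeg : ℕ → NF → NF
  | 0, φ => φ
  | k+1, φ => .neg (iterNeg k φ)

lemma canon : ∀ φ : NF, φ = iterNeg φ.depth (.var φ.base)
  | .var _ => rfl
  | .neg φ => congrArg NF.neg (canon φ)

lemma evalB_eq (v : ℕ → Bool) :
    ∀ φ : NF, φ.evalB v = xor (decide (Odd φ.depth)) (v φ.base)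
  | .var n => by simp [evalB, depth, base]
  | .neg φ => by
      rw [evalB, evalB_eq v φ]
      show _ = xor (decide (Odd (φ.depth + 1))) (v φ.base)
      rcases Nat.even_or_odd φ.depth with h | h
      · have h1 : ¬ Odd φ.depth := by simpa [Nat.odd_iff, Nat.even_iff] using h
        have h2 : Odd (φ.depth + 1) := Even.add_one h
        simp [h1, h2]
      · have h2 : ¬ Odd (φ.depth + 1) := by simp [Nat.odd_add_one, h]
        simp [h, h2]

lemma evalB_subst (v : ℕ → Bool) (σ : ℕ → NF) :
    ∀ φ : NF, (φ.subst σ).evalB v = φ.evalB (fun n => (σ n).evalB v)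
  | .var n => rfl
  | .neg φ => by rw [subst, evalB, evalB_subst v σ φ]; rfl

end NF

section Syntactic

variable {C : Set NF → NF → Prop}

lemma chain (hC : IsConsRel C) {a b c : NF} (h1 : C {a} b) (h2 : C {b} c) :
    C {a} c := by
  refine hC.2.2.1 {a} {b} c h2 ?_
  intro δ hδ
  rw [Set.mem_singleton_iff] at hδ
  subst hδ; exact h1

lemma selfC (hC : IsConsRel C) (a : NF) : C {a} a :=
  hC.1 {a} a rfl

lemma toMod (hC : IsConsRel C) (hR : HasNegRules C) (ψ : NF) :
    ∀ k, C {NF.iterNeg k ψ} (NF.iterNeg (k % 2) ψ) := by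
  intro k
  induction k using Nat.strong_induction_on with
  | _ k ih =>
    match k with
    | 0 => exact selfC hC _
    | 1 => exact selfC hC _
    | (k+2) =>
      have h1 : C {NF.iterNeg (k+2) ψ} (NF.iterNeg k ψ) := hR.2.2 (NF.iterNeg k ψ)
      have h2 := ih k (by omega)
      have : (k+2) % 2 = k % 2 := Nat.add_mod_right k 2
      rw [this]
      exact chain hC h1 h2

lemma fromMod (hC : IsConsRel C) (hR : HasNegRules C) (ψ : NF) :
    ∀ k, C {NF.iterNeg (k % 2) ψ} (NF.iterNeg k ψ) := by
  intro k
  induction k using Nat.strong_induction_on with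
  | _ k ih =>
    match k with
    | 0 => exact selfC hC _
    | 1 => exact selfC hC _
    | (k+2) =>
      have h1 : C {NF.iterNeg k ψ} (NF.iterNeg (k+2) ψ) := hR.2.1 (NF.iterNeg k ψ)
      have h2 := ih k (by omega)
      have : (k+2) % 2 = k % 2 := Nat.add_mod_right k 2
      rw [this]
      exact chain hC h2 h1

lemma reach (hC : IsConsRel C) (hR : HasNegRules C) (ψ : NF) {k j : ℕ}
    (h : Odd k ↔ Odd j) : C {NF.iterNeg k ψ} (NF.iterNeg j ψ) := by
  have hm : k % 2 = j % 2 := by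
    rw [Nat.odd_iff, Nat.odd_iff] at h
    omega
  have h1 := toMod hC hR ψ k
  have h2 := fromMod hC hR ψ j
  rw [← hm] at h2
  exact chain hC h1 h2

/-- From a single member of `Γ` derive in `Γ`. -/
lemma fromMem (hC : IsConsRel C) {Γ : Set NF} {γ φ : NF} (hγ : γ ∈ Γ)
    (h : C {γ} φ) : C Γ φ := by
  refine hC.2.2.1 Γ {γ} φ h ?_
  intro δ hδ
  rw [Set.mem_singleton_iff] at hδ
  rw [hδ]; exact hC.1 Γ γ hγ

lemma derive_to (hC : IsConsRel C) (hR : HasNegRules C) (γ ψ : NF)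
    (hb : γ.base = ψ.base) (hpar : Odd γ.depth ↔ Odd ψ.depth) : C {γ} ψ := by
  have h1 := reach hC hR (NF.var γ.base) (k := γ.depth) (j := ψ.depth) hpar
  rw [← NF.canon γ] at h1
  rw [hb] at h1
  rw [← NF.canon ψ] at h1
  exact h1

end Syntactic

theorem negation_fragment_axiomatization :
    ∀ Γ φ, NFSem Γ φ ↔
      ∀ C : Set NF → NF → Prop, IsConsRel C → HasNegRules C → C Γ φ := by
  intro Γ φ
  constructor
  · -- completeness
    intro h C hC hR
    classical
    by_cases hcon : ∃ γ ∈ Γ, ∃ δ ∈ Γ, γ.base = δ.base ∧ Odd γ.depth ∧ ¬ Odd δ.depth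
    · obtain ⟨γ, hγ, δ, hδ, hb, hoγ, hoδ⟩ := hcon
      have hγc : C {γ} (NF.neg (NF.var γ.base)) :=
        derive_to hC hR γ (NF.neg (NF.var γ.base)) rfl
          (by simp [NF.depth, NF.base, hoγ, Nat.odd_iff])
      have hδc : C {δ} (NF.var γ.base) :=
        derive_to hC hR δ (NF.var γ.base) hb.symm
          (by simp [NF.depth, NF.base, hoδ, Nat.odd_iff])
      have hrule : C {NF.var γ.base, NF.neg (NF.var γ.base)} φ := hR.1 (NF.var γ.base) φ
      refine hC.2.2.1 Γ {NF.var γ.base, NF.neg (NF.var γ.base)} φ hrule ?_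
      intro θ hθ
      rcases hθ with hθ | hθ
      · subst hθ; exact fromMem hC hδ hδc
      · rw [Set.mem_singleton_iff] at hθ
        subst hθ; exact fromMem hC hγ hγc
    · -- consistent: build the canonical valuation
      push_neg at hcon
      set v : ℕ → Bool := fun x =>
        !decide (∃ γ ∈ Γ, γ.base = x ∧ Odd γ.depth) with hv
      have hvf : ∀ x, (∃ γ ∈ Γ, γ.base = x ∧ Odd γ.depth) → v x = false := by
        intro x hx; simp [hv, hx]
      have hvt : ∀ x, (¬ ∃ γ ∈ Γ, γ.base = x ∧ Odd γ.depth) → v x = true := by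
        intro x hx; simp [hv, hx]
      have hsat : ∀ γ ∈ Γ, NF.evalB v γ = true := by
        intro γ hγ
        rw [NF.evalB_eq]
        by_cases ho : Odd γ.depth
        · rw [hvf γ.base ⟨γ, hγ, rfl, ho⟩]; simp [ho]
        · rw [hvt γ.base (by rintro ⟨δ, hδ, hbe, hod⟩; exact ho (hcon δ hδ γ hγ hbe hod))]
          simp [ho]
      have hφ := h v hsat
      by_cases hex : ∃ γ ∈ Γ, γ.base = φ.base
      · obtain ⟨γ, hγ, hb⟩ := hex
        have hγt := hsat γ hγ
        rw [NF.evalB_eq] at hγt hφ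
        rw [hb] at hγt
        have hpar : Odd γ.depth ↔ Odd φ.depth := by
          by_cases h1 : Odd γ.depth <;> by_cases h2 : Odd φ.depth <;>
            simp [h1, h2] at hγt hφ ⊢ <;> simp [hγt] at hφ
        exact fromMem hC hγ (derive_to hC hR γ φ hb hpar)
      · exfalso
        push_neg at hex
        set v' : ℕ → Bool := fun x => if x = φ.base then !(v x) else v x with hv'
        have hsat' : ∀ γ ∈ Γ, NF.evalB v' γ = true := by
          intro γ hγ
          rw [NF.evalB_eq]
          have : v' γ.base = v γ.base := by
            rw [hv']; simp [hex γ hγ]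
          rw [this, ← NF.evalB_eq]
          exact hsat γ hγ
        have hφ' := h v' hsat'
        rw [NF.evalB_eq] at hφ hφ'
        have : v' φ.base = !(v φ.base) := by rw [hv']; simp
        rw [this] at hφ'
        rcases Bool.eq_false_or_eq_true (v φ.base) with hb | hb <;>
          rcases Bool.eq_false_or_eq_true (decide (Odd φ.depth)) with hd | hd <;>
          simp [hb, hd] at hφ hφ'
  · -- soundness: NFSem itself is such a C
    intro h
    refine h NFSem ⟨?_, ?_, ?_, ?_⟩ ⟨?_, ?_, ?_⟩
    · intro Γ' φ' hmem v hv; exact hv φ' hmem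
    · intro Γ' Δ φ' hsub hΓ v hv; exact hΓ v (fun γ hγ => hv γ (hsub hγ))
    · intro Γ' Δ φ' hΔ hall v hv
      exact hΔ v (fun δ hδ => hall δ hδ v hv)
    · intro Γ' φ' σ hΓ v hv
      rw [NF.evalB_subst]
      refine hΓ _ ?_
      intro γ hγ
      rw [← NF.evalB_subst]
      exact hv _ ⟨γ, hγ, rfl⟩
    · intro φ' ψ v hv
      have h1 := hv φ' (by simp)
      have h2 := hv (NF.neg φ') (by simp)
      rw [NF.evalB] at h2
      rw [h1] at h2
      simp at h2
    · intro φ' v hv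
      have h1 := hv φ' (by simp)
      simp [NF.evalB, h1]
    · intro φ' v hv
      have h1 := hv (NF.neg (NF.neg φ')) (by simp)
      simp [NF.evalB] at h1
      exact h1
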